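/- arXiv:1305.2218 — 2 statements merged into one kernel-verified Lean document; each statement's English description precedes it below -/
import Mathlib

section
/- Let f : ℝᵈ → ℝ be L-smooth and μ-strongly convex with gradient g, X ⊆ ℝᵈ nonempty closed convex, and x* a minimizer of f over X. Fix x_{t−1} ∈ X, a vector δ ∈ ℝᵈ with ‖δ‖ ≤ Q, set ĝ = g(x_{t−1}) + δ, and let x_t = argmin_{x∈X}{⟨ĝ, x⟩ + (1/(2γ))‖x − x_{t−1}‖²} with 0 < γ and γL < 1. Then f(x_t) − f(x*) ≤ ((1−γμ)/(2γ))‖x_{t−1}−x*‖² − (1/(2γ))‖x_t−x*‖² − ⟨δ, x_{t−1}−x*⟩ + (γ/(2(1−γL)))‖δ‖². -/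
private lemma sgd_aux1 (γ t x y u : ℝ) (hγ : γ ≠ 0) :
    t * ((x + 1/γ * y) + t * (u / (2*γ)))
      = t * x + 1/(2*γ) * (2 * (t * y) + t^2 * u) := by
  field_simp
  ring

private lemma sgd_aux2 (γ x y z : ℝ) (hγ : γ ≠ 0) :
    (1/γ) * ((x - y - z)/2) = 1/(2*γ) * x - 1/(2*γ) * y - 1/(2*γ) * z := by
  simp only [one_div, mul_inv]
  ring

private lemma sgd_aux3 (γ μ x : ℝ) (hγ : γ ≠ 0) :
    (1 - γ*μ)/(2*γ) * x = 1/(2*γ) * x - μ/2 * x := by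
  field_simp

private lemma sgd_aux4 (γ L a b : ℝ) (hγ : γ ≠ 0) (h1 : 1 - γ*L ≠ 0) :
    γ/(2*(1 - γ*L)) * b^2 - (b * a + L/2 * a^2 - 1/(2*γ) * a^2)
      = ((1 - γ*L) * a - γ * b)^2 / (2*γ*(1 - γ*L)) := by
  field_simp
  ring

set_option maxHeartbeats 1000000 in
theorem sgd_one_step (d : ℕ)
    (f : EuclideanSpace ℝ (Fin d) → ℝ) (g : EuclideanSpace ℝ (Fin d) → EuclideanSpace ℝ (Fin d))
    (L μ Q : ℝ) (hL : 0 < L) (hμ : 0 < μ) (hQ : 0 < Q)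
    (hsmooth : ∀ x y, f y ≤ f x + inner ℝ (g x) (y - x) + L / 2 * ‖y - x‖ ^ 2)
    (hsc : ∀ x y, f y ≥ f x + inner ℝ (g x) (y - x) + μ / 2 * ‖y - x‖ ^ 2)
    (X : Set (EuclideanSpace ℝ (Fin d))) (hne : X.Nonempty) (hX : IsClosed X)
    (hconv : Convex ℝ X)
    (xstar : EuclideanSpace ℝ (Fin d)) (hxstar : xstar ∈ X)
    (hmin : ∀ y ∈ X, f xstar ≤ f y)
    (xprev : EuclideanSpace ℝ (Fin d)) (hxprev : xprev ∈ X)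
    (δ : EuclideanSpace ℝ (Fin d)) (hδ : ‖δ‖ ≤ Q)
    (ghat : EuclideanSpace ℝ (Fin d)) (hghat : ghat = g xprev + δ)
    (γ : ℝ) (hγ : 0 < γ) (hγL : γ * L < 1)
    (xt : EuclideanSpace ℝ (Fin d)) (hxt : xt ∈ X)
    (hargmin : ∀ x ∈ X,
      inner ℝ ghat xt + 1 / (2 * γ) * ‖xt - xprev‖ ^ 2 ≤
        inner ℝ ghat x + (1 / (2 * γ) * ‖x - xprev‖ ^ 2 : ℝ)) :
    f xt - f xstar ≤
      (1 - γ * μ) / (2 * γ) * ‖xprev - xstar‖ ^ 2 -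
        1 / (2 * γ) * ‖xt - xstar‖ ^ 2 -
        inner ℝ δ (xprev - xstar) + γ / (2 * (1 - γ * L)) * ‖δ‖ ^ 2 := by
  have hγ0 : γ ≠ 0 := ne_of_gt hγ
  have h1L : (0:ℝ) < 1 - γ * L := by linarith
  -- variational inequality for the argmin
  have hVI : (0:ℝ) ≤ inner ℝ ghat (xstar - xt) + (1/γ) * inner ℝ (xt - xprev) (xstar - xt) := by
    set A : ℝ := inner ℝ ghat (xstar - xt) + (1/γ) * inner ℝ (xt - xprev) (xstar - xt) with hAdef
    set B : ℝ := ‖xstar - xt‖^2 / (2*γ) with hBdef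
    have hB : 0 ≤ B := by positivity
    have key : ∀ t : ℝ, 0 < t → t ≤ 1 → 0 ≤ A + t * B := by
      intro t ht ht1
      have hmem : xt + t • (xstar - xt) ∈ X := by
        have h := hconv hxt hxstar (by linarith : (0:ℝ) ≤ 1 - t) ht.le (by ring)
        have e : (1 - t) • xt + t • xstar = xt + t • (xstar - xt) := by module
        rwa [e] at h
      have h := hargmin _ hmem
      have e1 : (inner ℝ ghat (xt + t • (xstar - xt)) : ℝ)
          = inner ℝ ghat xt + t * inner ℝ ghat (xstar - xt) := by
        rw [inner_add_right, real_inner_smul_right]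
      have e2 : xt + t • (xstar - xt) - xprev = (xt - xprev) + t • (xstar - xt) := by abel
      have e3 : ‖(xt - xprev) + t • (xstar - xt)‖^2
          = ‖xt - xprev‖^2 + 2 * (t * inner ℝ (xt - xprev) (xstar - xt)) + t^2 * ‖xstar - xt‖^2 := by
        rw [norm_add_sq_real, real_inner_smul_right, norm_smul]
        rw [Real.norm_eq_abs, abs_of_pos ht]
        ring
      rw [e1, e2, e3] at h
      have key2 : 0 ≤ t * (A + t * B) := by
        have e : t * (A + t * B)
            = t * inner ℝ ghat (xstar - xt)
              + 1 / (2*γ) * (2 * (t * inner ℝ (xt - xprev) (xstar - xt))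
                + t^2 * ‖xstar - xt‖^2) := by
          rw [hAdef, hBdef]
          exact sgd_aux1 γ t _ _ _ hγ0
        rw [e]
        nlinarith [h]
      nlinarith [key2, ht]
    clear_value A B
    by_contra hcon
    push_neg at hcon
    have htpos : 0 < min 1 (-A / (2*(B+1))) := by
      apply lt_min one_pos
      apply div_pos (by linarith) (by linarith)
    have h := key _ htpos (min_le_left _ _)
    have hle : min 1 (-A/(2*(B+1))) ≤ -A/(2*(B+1)) := min_le_right _ _
    have hBB : min 1 (-A/(2*(B+1))) * B ≤ (-A/(2*(B+1))) * B :=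
      mul_le_mul_of_nonneg_right hle hB
    have hfin : (-A/(2*(B+1))) * B ≤ -A/2 := by
      rw [div_mul_eq_mul_div, div_le_div_iff₀ (by linarith) (by norm_num)]
      nlinarith
    linarith
  -- smoothness + strong convexity
  have S1 : f xt - f xstar ≤ (inner ℝ (g xprev) (xt - xstar) : ℝ)
      + L/2 * ‖xt - xprev‖^2 - μ/2 * ‖xprev - xstar‖^2 := by
    have h1 := hsmooth xprev xt
    have h2 := hsc xprev xstar
    have e : (inner ℝ (g xprev) (xt - xprev) : ℝ) - inner ℝ (g xprev) (xstar - xprev)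
        = inner ℝ (g xprev) (xt - xstar) := by
      rw [← inner_sub_right]
      congr 1
      abel
    rw [norm_sub_rev xstar xprev] at h2
    have h1' : f xt ≤ f xprev + (inner ℝ (g xprev) (xt - xprev) : ℝ) + L/2 * ‖xt - xprev‖^2 := by
      simpa using h1
    linarith
  -- bound on the gradient inner ℝ product via the variational inequality
  have S2 : (inner ℝ (g xprev) (xt - xstar) : ℝ) ≤
      1/(2*γ) * ‖xprev - xstar‖^2 - 1/(2*γ) * ‖xt - xprev‖^2 - 1/(2*γ) * ‖xt - xstar‖^2
      + ‖δ‖ * ‖xt - xprev‖ - inner ℝ δ (xprev - xstar) := by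
    have eg : (inner ℝ ghat (xstar - xt) : ℝ)
        = inner ℝ (g xprev) (xstar - xt) + inner ℝ δ (xstar - xt) := by
      rw [hghat, inner_add_left]
    have e1 : (inner ℝ (g xprev) (xstar - xt) : ℝ) = - inner ℝ (g xprev) (xt - xstar) := by
      rw [← inner_neg_right]
      congr 1
      abel
    have e2 : (inner ℝ (xt - xprev) (xstar - xt) : ℝ)
        = (‖xprev - xstar‖^2 - ‖xt - xprev‖^2 - ‖xt - xstar‖^2)/2 := by
      have h := norm_add_sq_real (xt - xprev) (xstar - xt)
      have e : (xt - xprev) + (xstar - xt) = xstar - xprev := by abel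
      rw [e, norm_sub_rev xstar xprev, norm_sub_rev xstar xt] at h
      linarith
    have e3 : (inner ℝ δ (xstar - xt) : ℝ) = - inner ℝ δ (xprev - xstar) + inner ℝ δ (xprev - xt) := by
      rw [← inner_neg_right, ← inner_add_right]
      congr 1
      abel
    have e4 : (inner ℝ δ (xprev - xt) : ℝ) ≤ ‖δ‖ * ‖xprev - xt‖ := real_inner_le_norm _ _
    rw [norm_sub_rev xprev xt] at e4
    rw [eg, e1, e3, e2] at hVI
    have ecoef : (1/γ) * ((‖xprev - xstar‖^2 - ‖xt - xprev‖^2 - ‖xt - xstar‖^2)/2)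
        = 1/(2*γ) * ‖xprev - xstar‖^2 - 1/(2*γ) * ‖xt - xprev‖^2
          - 1/(2*γ) * ‖xt - xstar‖^2 := sgd_aux2 γ _ _ _ hγ0
    linarith [hVI, ecoef, e4]
  have ecoef2 : (1 - γ*μ)/(2*γ) * ‖xprev - xstar‖^2
      = 1/(2*γ) * ‖xprev - xstar‖^2 - μ/2 * ‖xprev - xstar‖^2 := sgd_aux3 γ μ _ hγ0
  have young : ‖δ‖ * ‖xt - xprev‖ + L/2 * ‖xt - xprev‖^2 - 1/(2*γ) * ‖xt - xprev‖^2
      ≤ γ/(2*(1 - γ*L)) * ‖δ‖^2 := by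
    have e : γ/(2*(1 - γ*L)) * ‖δ‖^2
        - (‖δ‖ * ‖xt - xprev‖ + L/2 * ‖xt - xprev‖^2 - 1/(2*γ) * ‖xt - xprev‖^2)
        = ((1 - γ*L) * ‖xt - xprev‖ - γ * ‖δ‖)^2 / (2*γ*(1 - γ*L)) :=
      sgd_aux4 γ L _ _ hγ0 (ne_of_gt h1L)
    have hpos : 0 ≤ ((1 - γ*L) * ‖xt - xprev‖ - γ * ‖δ‖)^2 / (2*γ*(1 - γ*L)) := by positivity
    linarith
  linarith [S1, S2, young, ecoef2]
end

section
/- With α_t = 2/(t+1), γ_t = 2/(μ(t+2κ)), κ = L/μ ≥ 1, and weights w_t = 2t/(T(T+1)), the step-size/weight compatibility holds: for every 1 ≤ t ≤ T, w_t·((1−γ_tμ)/(2γ_t)) − w_{t−1}/(2γ_{t−1}) ≤ w_t·L/(2t), where w_0 := 0 and γ_0 := 1. -/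
theorem step_weight_compat (μ L : ℝ) (hμ : 0 < μ) (hL : μ ≤ L)
    (κ : ℝ) (hκ : κ = L / μ) (T : ℕ) (hT : 1 ≤ T)
    (w γ : ℕ → ℝ) (hw0 : w 0 = 0) (hγ0 : γ 0 = 1)
    (hw : ∀ t : ℕ, 1 ≤ t → w t = 2 * (t : ℝ) / ((T : ℝ) * ((T : ℝ) + 1)))
    (hγ : ∀ t : ℕ, 1 ≤ t → γ t = 2 / (μ * ((t : ℝ) + 2 * κ))) :
    ∀ t : ℕ, 1 ≤ t → t ≤ T →
      w t * ((1 - γ t * μ) / (2 * γ t)) - w (t - 1) / (2 * γ (t - 1)) ≤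
        w t * L / (2 * (t : ℝ)) := by
  intro t ht htT
  have hκ1 : 1 ≤ κ := by
    rw [hκ, le_div_iff₀ hμ]; linarith
  have hT0 : (0:ℝ) < T := by exact_mod_cast Nat.pos_of_ne_zero (by omega)
  have ht0 : (1:ℝ) ≤ (t:ℝ) := by exact_mod_cast ht
  have hdt : (0:ℝ) < (t:ℝ) + 2 * κ := by nlinarith
  have hLμκ : L = μ * κ := by rw [hκ]; field_simp
  have hTT : (0:ℝ) < (T:ℝ) * ((T:ℝ) + 1) := by positivity
  have hTT' : (T:ℝ) * ((T:ℝ) + 1) ≠ 0 := ne_of_gt hTT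
  have hμ' : μ ≠ 0 := ne_of_gt hμ
  have ht' : (0:ℝ) < (t:ℝ) := by linarith
  have key1 : ∀ X : ℝ, 0 < X →
      (1 - 2 / (μ * X) * μ) / (2 * (2 / (μ * X))) = μ * (X - 2) / 4 := by
    intro X hX
    have : μ * X ≠ 0 := by positivity
    field_simp
    ring
  rw [hw t ht, hγ t ht, hLμκ, key1 _ hdt]
  rcases eq_or_lt_of_le ht with h1 | h2
  · -- t = 1
    have : t = 1 := h1.symm
    subst this
    simp only [Nat.cast_one]
    rw [show (1:ℕ) - 1 = 0 from rfl, hw0, hγ0]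
    have e1 : 2 * (1:ℝ) / ((T:ℝ) * ((T:ℝ) + 1)) * (μ * (1 + 2 * κ - 2) / 4) - 0 / (2 * 1)
        = μ * (2 * κ - 1) / (2 * ((T:ℝ) * ((T:ℝ) + 1))) := by
      field_simp
      ring
    have e2 : 2 * (1:ℝ) / ((T:ℝ) * ((T:ℝ) + 1)) * (μ * κ) / (2 * 1)
        = μ * κ / ((T:ℝ) * ((T:ℝ) + 1)) := by
      field_simp
    rw [e1, e2, div_le_div_iff₀ (by positivity) hTT]
    nlinarith [mul_pos hμ hTT]
  · -- t ≥ 2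
    have ht1 : 1 ≤ t - 1 := by omega
    have hcast : ((t - 1 : ℕ) : ℝ) = (t:ℝ) - 1 := by
      push_cast [Nat.cast_sub (by omega : 1 ≤ t)]; ring
    rw [hw (t-1) ht1, hγ (t-1) ht1, hcast]
    have hdt' : (0:ℝ) < (t:ℝ) - 1 + 2 * κ := by nlinarith
    have hdt'' : μ * ((t:ℝ) - 1 + 2 * κ) ≠ 0 := by positivity
    have eL : 2 * (t:ℝ) / ((T:ℝ) * ((T:ℝ) + 1)) * (μ * ((t:ℝ) + 2 * κ - 2) / 4)
        - 2 * ((t:ℝ) - 1) / ((T:ℝ) * ((T:ℝ) + 1)) / (2 * (2 / (μ * ((t:ℝ) - 1 + 2 * κ))))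
        = μ * (2 * κ - 1) / (2 * ((T:ℝ) * ((T:ℝ) + 1))) := by
      field_simp
      ring
    have eR : 2 * (t:ℝ) / ((T:ℝ) * ((T:ℝ) + 1)) * (μ * κ) / (2 * (t:ℝ))
        = μ * κ / ((T:ℝ) * ((T:ℝ) + 1)) := by
      field_simp
    rw [eL, eR, div_le_div_iff₀ (by positivity) hTT]
    nlinarith [mul_pos hμ hTT]
end
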